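/- arXiv:1910.09816 — 4 statements merged into one kernel-verified Lean document; each statement's English description precedes it below -/
import Mathlib

section
/- Let (A,φ) be a PCA over Set. Then φ is the maximal filter (the set of all nonempty subsets of A) if and only if for every assembly X over (A,φ) and every x ∈ |X|, the constant function at x is a morphism of assemblies ∇1 → X (where 1 is a one-element set); equivalently, Γ commutes up to isomorphism with the global sections functors of Asm(A,φ) and of Set. -/
open CategoryTheory

namespace PcaPaper

/-- A partial binary application on `A`. -/
abbrev PApp (A : Type) := A → A → Option A

variable {A B C : Type}

/-- Definedness of the application of inhabited subsets. -/
def SubDef (app : PApp A) (U V : Set A) : Prop :=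
  ∀ a ∈ U, ∀ b ∈ V, (app a b).isSome

/-- Application of subsets. -/
def SubApp (app : PApp A) (U V : Set A) : Set A :=
  {c | ∃ a ∈ U, ∃ b ∈ V, app a b = some c}

/-- Terms with `n` variables, built from variables by application. -/
inductive Term (n : ℕ) : Type
  | var : Fin n → Term n
  | op : Term n → Term n → Term n

/-- Evaluation of a term at a vector of elements, as a partial function. -/
def Term.eval (app : PApp A) : {n : ℕ} → Term n → (Fin n → A) → Option A
  | _, .var i, ρ => some (ρ i)
  | _, .op s t, ρ => (Term.eval app s ρ).bind fun x => (Term.eval app t ρ).bind fun y => app x y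

/-- Evaluation of a term at a vector of subsets. -/
def Term.subEval (app : PApp A) : {n : ℕ} → Term n → (Fin n → Set A) → Set A
  | _, .var i, ρ => ρ i
  | _, .op s t, ρ => SubApp app (Term.subEval app s ρ) (Term.subEval app t ρ)

/-- Definedness of the evaluation of a term at a vector of subsets. -/
def Term.subDef (app : PApp A) : {n : ℕ} → Term n → (Fin n → Set A) → Prop
  | _, .var _, _ => True
  | _, .op s t, ρ => Term.subDef app s ρ ∧ Term.subDef app t ρ ∧
      SubDef app (Term.subEval app s ρ) (Term.subEval app t ρ)

/-- `r · a 0 · … · a (k-1)`, associated to the left. -/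
def appVec (app : PApp A) (r : A) : (k : ℕ) → (Fin k → A) → Option A
  | 0, _ => some r
  | k + 1, a => (appVec app r k fun i => a i.castSucc).bind fun s => app s (a (Fin.last k))

/-- `U` realizes `λ x₀ … xₙ. t`. -/
def Realizes (app : PApp A) (U : Set A) {n : ℕ} (t : Term (n + 1)) : Prop :=
  ∀ r ∈ U, ∀ a : Fin (n + 1) → A,
    (appVec app r n fun i => a i.castSucc).isSome ∧
    ∀ b, Term.eval app t a = some b → appVec app r (n + 1) a = some b

/-- A filter of inhabited subsets on a partial applicative structure. -/
structure IsPcaFilter (app : PApp A) (φ : Set (Set A)) : Prop where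
  nonempty : ∀ U ∈ φ, U.Nonempty
  upward : ∀ U ∈ φ, ∀ V : Set A, U ⊆ V → V ∈ φ
  appClosed : ∀ U ∈ φ, ∀ V ∈ φ, SubDef app U V → SubApp app U V ∈ φ

/-- Combinatorial completeness of a set of subsets. -/
def CombComplete (app : PApp A) (G : Set (Set A)) : Prop :=
  ∀ (n : ℕ) (t : Term (n + 1)), ∃ U ∈ G, Realizes app U t

/-- The least filter containing `G`. -/
def genFilter (app : PApp A) (G : Set (Set A)) : Set (Set A) :=
  ⋂₀ {ψ | IsPcaFilter app ψ ∧ G ⊆ ψ}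

/-- A (relative) PCA over the base category `Set`: a nonempty set with a partial
binary application and a combinatorially complete filter of inhabited subsets. -/
structure PCA (A : Type) where
  app : PApp A
  nonemptyCarrier : Nonempty A
  filt : Set (Set A)
  isFilter : IsPcaFilter app filt
  complete : CombComplete app filt

/- ### Helper lemmas -/

lemma isSome_bind_left {α β : Type} {o : Option α} {f : α → Option β}
    (h : (o.bind f).isSome) : o.isSome := by
  cases o <;> simp_all

lemma appVec_two_pre (app : PApp A) (r u v x : A) :
    (appVec app r 2 fun i => (![u, v, x] : Fin 3 → A) i.castSucc)
      = (app r u).bind fun s => app s v := rfl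

lemma appVec_three_cons (app : PApp A) (r u v x : A) :
    appVec app r (2 + 1) ![u, v, x]
      = ((app r u).bind fun s => app s v).bind fun s => app s x := rfl

lemma eval_comp_term (app : PApp A) (u v x : A) :
    Term.eval app (Term.op (.var 1) (.op (.var 0) (.var 2))) ![u, v, x]
      = (app u x).bind fun y => app v y := by
  simp [Term.eval]

lemma eval_app2_term (app : PApp A) (u v x : A) :
    Term.eval app (Term.op (.op (.var 0) (.var 1)) (.var 2)) ![u, v, x]
      = (app u v).bind fun d => app d x := by
  simp [Term.eval]

lemma filt_nonempty (P : PCA A) : ∃ U, U ∈ P.filt := by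
  obtain ⟨U, hU, -⟩ := P.complete 0 (.var 0)
  exact ⟨U, hU⟩

lemma univ_mem_filt (P : PCA A) : (Set.univ : Set A) ∈ P.filt := by
  obtain ⟨U, hU⟩ := filt_nonempty P
  exact P.isFilter.upward U hU _ (Set.subset_univ U)

lemma exists_ireal (P : PCA A) :
    ∃ U ∈ P.filt, ∀ r ∈ U, ∀ a : A, P.app r a = some a := by
  obtain ⟨U, hU, hreal⟩ := P.complete 0 (.var 0)
  refine ⟨U, hU, fun r hr a => ?_⟩
  have h := (hreal r hr fun _ => a).2 a (by simp [Term.eval])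
  simpa [appVec] using h

lemma realizes3_chain (P : PCA A) {T : Set A} {t : Term (2 + 1)}
    (hreal : Realizes P.app T t) {r : A} (hr : r ∈ T) (u v : A) :
    ∃ s w, P.app r u = some s ∧ P.app s v = some w := by
  have h1 : ((P.app r u).bind fun s => P.app s v).isSome := by
    have h := (hreal r hr ![u, v, v]).1
    rwa [appVec_two_pre] at h
  cases hru : P.app r u with
  | none => rw [hru] at h1; simp at h1
  | some s =>
    rw [hru] at h1
    simp only [Option.bind_some] at h1
    obtain ⟨w, hw⟩ := Option.isSome_iff_exists.mp h1
    exact ⟨s, w, rfl, hw⟩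

lemma exists_tracker3 (P : PCA A) (t : Term (2 + 1)) {U V : Set A}
    (hU : U ∈ P.filt) (hV : V ∈ P.filt) :
    ∃ W ∈ P.filt, ∀ w ∈ W, ∃ u ∈ U, ∃ v ∈ V,
      ∀ x c : A, Term.eval P.app t ![u, v, x] = some c → P.app w x = some c := by
  obtain ⟨T, hT, hreal⟩ := P.complete 2 t
  have hdef1 : SubDef P.app T U := by
    intro r hr u _
    obtain ⟨s, w, hs, -⟩ := realizes3_chain P hreal hr u u
    simp [hs]
  have hTU := P.isFilter.appClosed T hT U hU hdef1
  have hdef2 : SubDef P.app (SubApp P.app T U) V := by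
    rintro s ⟨r, hr, u, hu, hru⟩ v _
    obtain ⟨s', w, hs', hw⟩ := realizes3_chain P hreal hr u v
    rw [hru] at hs'
    injection hs' with h
    subst h
    simp [hw]
  refine ⟨SubApp P.app (SubApp P.app T U) V,
    P.isFilter.appClosed _ hTU V hV hdef2, ?_⟩
  rintro w ⟨s, ⟨r, hr, u, hu, hru⟩, v, hv, hsv⟩
  refine ⟨u, hu, v, hv, fun x c hc => ?_⟩
  have h2 : appVec P.app r (2 + 1) ![u, v, x] = some c := (hreal r hr ![u, v, x]).2 c hc
  rw [appVec_three_cons, hru] at h2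
  simp only [Option.bind_some] at h2
  rw [hsv] at h2
  simpa using h2

/- ### Assemblies -/

/-- An assembly over a PCA `(A, φ)`. -/
structure Asm {A : Type} (P : PCA A) : Type 1 where
  carrier : Type
  E : carrier → A → Prop
  total : ∀ x, ∃ a, E x a

/-- `U` tracks the function `f` between (the carriers of) two assemblies. -/
def Tracks (P : PCA A) {X Y : Asm P} (U : Set A) (f : X.carrier → Y.carrier) : Prop :=
  ∀ x a r, X.E x a → r ∈ U → ∃ b, P.app r a = some b ∧ Y.E (f x) b

/-- The category of assemblies over a PCA. -/
instance asmCategory (P : PCA A) : Category (Asm P) where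
  Hom X Y := {f : X.carrier → Y.carrier // ∃ U ∈ P.filt, Tracks P U f}
  id X := ⟨fun x => x, by
    obtain ⟨U, hU, hI⟩ := exists_ireal P
    exact ⟨U, hU, fun x a r hx hr => ⟨a, hI r hr a, hx⟩⟩⟩
  comp {X Y Z} f g := ⟨fun x => g.1 (f.1 x), by
    obtain ⟨U, hU, hf⟩ := f.2
    obtain ⟨V, hV, hg⟩ := g.2
    obtain ⟨W, hW, hkey⟩ := exists_tracker3 P
      (Term.op (.var 1) (.op (.var 0) (.var 2))) hU hV
    refine ⟨W, hW, fun x a w hx hw => ?_⟩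
    obtain ⟨u, hu, v, hv, key⟩ := hkey w hw
    obtain ⟨b, hb, hYb⟩ := hf x a u hx hu
    obtain ⟨c, hc, hZc⟩ := hg (f.1 x) b v hYb hv
    refine ⟨c, key a c ?_, hZc⟩
    rw [eval_comp_term, hb]
    simpa using hc⟩
  id_comp f := Subtype.ext rfl
  comp_id f := Subtype.ext rfl
  assoc f g h := Subtype.ext rfl

/-- The global-sections-like functor `Γ : Asm(A,φ) ⥤ Set`. -/
def Gam (P : PCA A) : Asm P ⥤ Type where
  obj X := X.carrier
  map f := TypeCat.ofHom f.1
  map_id _ := rfl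
  map_comp _ _ := rfl

/-- The constant-object assembly `∇ Y`. -/
def nablaObj (P : PCA A) (Y : Type) : Asm P where
  carrier := Y
  E := fun _ _ => True
  total := fun _ => P.nonemptyCarrier.elim fun a => ⟨a, trivial⟩

/-- The functor `∇ : Set ⥤ Asm(A,φ)`. -/
def Nab (P : PCA A) : Type ⥤ Asm P where
  obj Y := nablaObj P Y
  map {Y Z} f := ⟨f, by
    obtain ⟨U, hU, hI⟩ := exists_ireal P
    exact ⟨U, hU, fun y a r _ hr => ⟨a, hI r hr a, trivial⟩⟩⟩
  map_id _ := Subtype.ext rfl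
  map_comp _ _ := Subtype.ext rfl

/- ### Applicative morphisms -/

/-- The image of a subset under a relation. -/
def relImage (f : A → B → Prop) (V : Set A) : Set B :=
  {b | ∃ a ∈ V, f a b}

/-- `U` tracks the relation `f` as an applicative (pre)morphism. -/
def Tracks₂ (appA : PApp A) (appB : PApp B) (U : Set B) (f : A → B → Prop) : Prop :=
  ∀ a a' c, appA a a' = some c → ∀ b b', f a b → f a' b' → ∀ r ∈ U,
    ∃ d e, appB r b = some d ∧ appB d b' = some e ∧ f c e

/-- `f ⊆ A × B` is an applicative morphism `(A,φ) → (B,ψ)`. -/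
structure IsAppMor (appA : PApp A) (φ : Set (Set A)) (appB : PApp B) (ψ : Set (Set B))
    (f : A → B → Prop) : Prop where
  total : ∀ a, ∃ b, f a b
  tracked : ∃ U ∈ ψ, Tracks₂ appA appB U f
  image : ∀ V ∈ φ, relImage f V ∈ ψ

/-- The preorder `f ≤ f'` on relations `A × B`, relative to `(B,ψ)`. -/
def RelLe (appB : PApp B) (ψ : Set (Set B)) (f f' : A → B → Prop) : Prop :=
  ∃ U ∈ ψ, ∀ a b, f a b → ∀ r ∈ U, ∃ c, appB r b = some c ∧ f' a c

/-- Relational composition: `(RelComp g f) a c ↔ ∃ b, f a b ∧ g b c`. -/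
def RelComp (g : B → C → Prop) (f : A → B → Prop) : A → C → Prop :=
  fun a c => ∃ b, f a b ∧ g b c

/-- The diagonal (identity) relation `δ_A`. -/
def relId (A : Type) : A → A → Prop := fun a b => a = b

/- ### The functor Asm(f) induced by an applicative morphism -/

/-- The action of an applicative morphism on an assembly. -/
def asmObj (P : PCA A) (Q : PCA B) (f : A → B → Prop) (htot : ∀ a, ∃ b, f a b)
    (X : Asm P) : Asm Q where
  carrier := X.carrier
  E := fun x b => ∃ a, X.E x a ∧ f a b
  total := fun x => by
    obtain ⟨a, ha⟩ := X.total x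
    obtain ⟨b, hb⟩ := htot a
    exact ⟨b, a, ha, hb⟩

lemma tracks_asmMap {P : PCA A} {Q : PCA B} {f : A → B → Prop}
    (hf : IsAppMor P.app P.filt Q.app Q.filt f) {X Y : Asm P}
    (g : X.carrier → Y.carrier) (hg : ∃ U ∈ P.filt, Tracks P U g) :
    ∃ W ∈ Q.filt,
      Tracks Q (X := asmObj P Q f hf.total X) (Y := asmObj P Q f hf.total Y) W g := by
  obtain ⟨U, hU, hgU⟩ := hg
  obtain ⟨T, hT, hfT⟩ := hf.tracked
  have hfU : relImage f U ∈ Q.filt := hf.image U hU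
  obtain ⟨W, hW, hkey⟩ := exists_tracker3 Q
    (Term.op (.op (.var 0) (.var 1)) (.var 2)) hT hfU
  refine ⟨W, hW, ?_⟩
  rintro x b w ⟨a, hxa, hab⟩ hw
  obtain ⟨v, hv, y, hy, key⟩ := hkey w hw
  obtain ⟨u, hu, huy⟩ := hy
  obtain ⟨a', ha', hEa'⟩ := hgU x a u hxa hu
  obtain ⟨d, e, hd, he, hfe⟩ := hfT u a a' ha' y b huy hab v hv
  refine ⟨e, key b e ?_, a', hEa', hfe⟩
  rw [eval_app2_term, hd]
  simpa using he

/-- The functor `Asm(f) : Asm(A,φ) ⥤ Asm(B,ψ)` induced by an applicative morphism. -/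
def asmFunctor {P : PCA A} {Q : PCA B} {f : A → B → Prop}
    (hf : IsAppMor P.app P.filt Q.app Q.filt f) : Asm P ⥤ Asm Q where
  obj X := asmObj P Q f hf.total X
  map {X Y} g := ⟨g.1, tracks_asmMap hf g.1 g.2⟩
  map_id _ := Subtype.ext rfl
  map_comp _ _ := Subtype.ext rfl
/- ### Products of PASs -/

/-- Coordinatewise partial application on `A × B`. -/
def prodApp (appA : PApp A) (appB : PApp B) : PApp (A × B) := fun p q =>
  (appA p.1 q.1).bind fun x => (appB p.2 q.2).bind fun y => some (x, y)

/-- The set `φ × ψ` of rectangles `U ×ˢ V` with `U ∈ φ` and `V ∈ ψ`. -/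
def prodFiltSet (φ : Set (Set A)) (ψ : Set (Set B)) : Set (Set (A × B)) :=
  {W | ∃ U ∈ φ, ∃ V ∈ ψ, W = U ×ˢ V}

/-- The filter `⟨φ × ψ⟩` of the pseudocoproduct of two PCAs. -/
def prodFilt (P : PCA A) (Q : PCA B) : Set (Set (A × B)) :=
  genFilter (prodApp P.app Q.app) (prodFiltSet P.filt Q.filt)

/- ### Quasi-surjectivity and computational density -/

/-- A quasi-surjective applicative morphism. -/
def QuasiSurjective (P : PCA A) (Q : PCA B) (f : A → B → Prop) : Prop :=
  ∃ N ∈ Q.filt, ∀ U ∈ Q.filt, ∃ V ∈ P.filt,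
    ∀ n ∈ N, ∀ b ∈ relImage f V, ∃ c, Q.app n b = some c ∧ c ∈ U

/-- A computationally dense applicative morphism. -/
def CompDense (P : PCA A) (Q : PCA B) (f : A → B → Prop) : Prop :=
  ∃ M ∈ Q.filt, ∀ U ∈ Q.filt, ∃ V ∈ P.filt,
    (∀ r ∈ V, ∀ a : A, (P.app r a).isSome) ∧
    (∀ r ∈ V, ∀ a a', P.app r a = some a' →
      (∀ u ∈ U, ∀ b, f a b → (Q.app u b).isSome) →
      ∀ m ∈ M, ∀ b', f a' b' →
        ∃ c, Q.app m b' = some c ∧ ∃ u ∈ U, ∃ b'', f a b'' ∧ Q.app u b'' = some c)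

/- ### Slicing: fiberwise filters over an assembly -/

/-- Fiberwise definedness of the application of two subsets of `I × A`. -/
def fibSubDef (app : PApp A) {I : Type} (U V : Set (I × A)) : Prop :=
  ∀ i r s, (i, r) ∈ U → (i, s) ∈ V → (app r s).isSome

/-- Fiberwise application of two subsets of `I × A`. -/
def fibSubApp (app : PApp A) {I : Type} (U V : Set (I × A)) : Set (I × A) :=
  {p | ∃ r s, (p.1, r) ∈ U ∧ (p.1, s) ∈ V ∧ app r s = some p.2}

/-- A fiberwise filter over `I`. -/
structure IsFibFilter (app : PApp A) (I : Type) (Ψ : Set (Set (I × A))) : Prop where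
  inhab : ∀ U ∈ Ψ, ∀ i : I, ∃ a, (i, a) ∈ U
  upward : ∀ U ∈ Ψ, ∀ V : Set (I × A), U ⊆ V → V ∈ Ψ
  appClosed : ∀ U ∈ Ψ, ∀ V ∈ Ψ, fibSubDef app U V → fibSubApp app U V ∈ Ψ

/-- The filter `φ_I` of the slice PCA over an assembly `I`: the least fiberwise filter
containing `E_I` and all sets `|I| × V` for `V ∈ φ`. -/
def sliceFilt (P : PCA A) (I : Asm P) : Set (Set (I.carrier × A)) :=
  ⋂₀ {Ψ | IsFibFilter P.app I.carrier Ψ ∧ {p : I.carrier × A | I.E p.1 p.2} ∈ Ψ ∧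
      ∀ V ∈ P.filt, {p : I.carrier × A | p.2 ∈ V} ∈ Ψ}

lemma sliceFilt_upward {P : PCA A} {I : Asm P} {U V : Set (I.carrier × A)}
    (hU : U ∈ sliceFilt P I) (hUV : U ⊆ V) : V ∈ sliceFilt P I := by
  rw [sliceFilt, Set.mem_sInter] at hU ⊢
  intro Ψ hΨ
  exact hΨ.1.upward U (hU Ψ hΨ) V hUV

lemma sliceFilt_appClosed {P : PCA A} {I : Asm P} {U V : Set (I.carrier × A)}
    (hU : U ∈ sliceFilt P I) (hV : V ∈ sliceFilt P I) (hdef : fibSubDef P.app U V) :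
    fibSubApp P.app U V ∈ sliceFilt P I := by
  rw [sliceFilt, Set.mem_sInter] at hU hV ⊢
  intro Ψ hΨ
  exact hΨ.1.appClosed U (hU Ψ hΨ) V (hV Ψ hΨ) hdef

lemma base_mem_sliceFilt {P : PCA A} {I : Asm P} {V : Set A} (hV : V ∈ P.filt) :
    {p : I.carrier × A | p.2 ∈ V} ∈ sliceFilt P I := by
  rw [sliceFilt, Set.mem_sInter]
  intro Ψ hΨ
  exact hΨ.2.2 V hV

lemma EI_mem_sliceFilt (P : PCA A) (I : Asm P) :
    {p : I.carrier × A | I.E p.1 p.2} ∈ sliceFilt P I := by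
  rw [sliceFilt, Set.mem_sInter]
  intro Ψ hΨ
  exact hΨ.2.1

lemma exists_fib_tracker3 (P : PCA A) (I : Asm P) (t : Term (2 + 1))
    {U V : Set (I.carrier × A)} (hU : U ∈ sliceFilt P I) (hV : V ∈ sliceFilt P I) :
    ∃ W ∈ sliceFilt P I, ∀ i w, (i, w) ∈ W → ∃ u v, (i, u) ∈ U ∧ (i, v) ∈ V ∧
      ∀ x c : A, Term.eval P.app t ![u, v, x] = some c → P.app w x = some c := by
  obtain ⟨T, hT, hreal⟩ := P.complete 2 t
  have hT' : {p : I.carrier × A | p.2 ∈ T} ∈ sliceFilt P I := base_mem_sliceFilt hT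
  have hdef1 : fibSubDef P.app {p : I.carrier × A | p.2 ∈ T} U := by
    intro i r s hr _
    obtain ⟨s', w', h1, -⟩ := realizes3_chain P hreal hr s s
    simp [h1]
  have h1mem := sliceFilt_appClosed hT' hU hdef1
  have hdef2 : fibSubDef P.app (fibSubApp P.app {p : I.carrier × A | p.2 ∈ T} U) V := by
    rintro i s v ⟨r, u, hr, hu, hru⟩ _
    obtain ⟨s', w', hs', hw'⟩ := realizes3_chain P hreal hr u v
    rw [hru] at hs'
    injection hs' with h
    subst h
    simp [hw']
  refine ⟨_, sliceFilt_appClosed h1mem hV hdef2, ?_⟩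
  rintro i w ⟨s, v, ⟨r, u, hr, hu, hru⟩, hv, hsv⟩
  refine ⟨u, v, hu, hv, fun x c hc => ?_⟩
  have h2 : appVec P.app r (2 + 1) ![u, v, x] = some c := (hreal r hr ![u, v, x]).2 c hc
  rw [appVec_three_cons, hru] at h2
  simp only [Option.bind_some] at h2
  rw [hsv] at h2
  simpa using h2

/- ### The category of assemblies over the slice PCA `(A,φ)/I` -/

/-- Assemblies over the slice PCA `(A,φ)/I`. -/
structure SliceAsm (P : PCA A) (I : Asm P) : Type 1 where
  carrier : Type
  k : carrier → I.carrier
  E : carrier → A → Prop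
  total : ∀ x, ∃ a, E x a

/-- Fiberwise tracking for morphisms of assemblies over `(A,φ)/I`. -/
def SliceTracks (P : PCA A) (I : Asm P) {X Y : SliceAsm P I} (U : Set (I.carrier × A))
    (f : X.carrier → Y.carrier) : Prop :=
  ∀ x a r, X.E x a → (X.k x, r) ∈ U → ∃ b, P.app r a = some b ∧ Y.E (f x) b

instance sliceAsmCategory (P : PCA A) (I : Asm P) : Category (SliceAsm P I) where
  Hom X Y := {f : X.carrier → Y.carrier //
    (∀ x, Y.k (f x) = X.k x) ∧ ∃ U ∈ sliceFilt P I, SliceTracks P I U f}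
  id X := ⟨fun x => x, fun _ => rfl, by
    obtain ⟨U, hU, hI⟩ := exists_ireal P
    exact ⟨{p | p.2 ∈ U}, base_mem_sliceFilt hU,
      fun x a r hx hr => ⟨a, hI r hr a, hx⟩⟩⟩
  comp {X Y Z} f g := ⟨fun x => g.1 (f.1 x), fun x => (g.2.1 (f.1 x)).trans (f.2.1 x), by
    obtain ⟨U, hU, hf⟩ := f.2.2
    obtain ⟨V, hV, hg⟩ := g.2.2
    obtain ⟨W, hW, hkey⟩ := exists_fib_tracker3 P I
      (Term.op (.var 1) (.op (.var 0) (.var 2))) hU hV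
    refine ⟨W, hW, fun x a w hx hw => ?_⟩
    obtain ⟨u, v, hu, hv, key⟩ := hkey (X.k x) w hw
    obtain ⟨b, hb, hYb⟩ := hf x a u hx hu
    have hv' : (Y.k (f.1 x), v) ∈ V := by rw [f.2.1 x]; exact hv
    obtain ⟨c, hc, hZc⟩ := hg (f.1 x) b v hYb hv'
    refine ⟨c, key a c ?_, hZc⟩
    rw [eval_comp_term, hb]
    simpa using hc⟩
  id_comp f := Subtype.ext rfl
  comp_id f := Subtype.ext rfl
  assoc f g h := Subtype.ext rfl

/- ### Families of assemblies (products of PCAs) -/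

/-- The category of families of assemblies over a family of PCAs, with uniformly
tracked families of morphisms; this is the category of assemblies over the product
PCA of the family, taken over the product of the base categories. -/
structure FamAsm {I : Type} {A : I → Type} (P : ∀ i, PCA (A i)) : Type 1 where
  obj : ∀ i, Asm (P i)

instance famAsmCategory {I : Type} {A : I → Type} (P : ∀ i, PCA (A i)) :
    Category (FamAsm P) where
  Hom X Y := {f : ∀ i, (X.obj i).carrier → (Y.obj i).carrier //
    ∃ U : ∀ i, Set (A i), (∀ i, U i ∈ (P i).filt) ∧ ∀ i, Tracks (P i) (U i) (f i)}
  id X := ⟨fun i x => x, by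
    choose U hU using fun i => exists_ireal (P i)
    exact ⟨U, fun i => (hU i).1, fun i x a r hx hr => ⟨a, (hU i).2 r hr a, hx⟩⟩⟩
  comp {X Y Z} f g := ⟨fun i x => g.1 i (f.1 i x), by
    obtain ⟨U, hU, hf⟩ := f.2
    obtain ⟨V, hV, hg⟩ := g.2
    choose W hW using fun i => exists_tracker3 (P i)
      (Term.op (.var 1) (.op (.var 0) (.var 2))) (hU i) (hV i)
    refine ⟨W, fun i => (hW i).1, fun i x a w hx hw => ?_⟩
    obtain ⟨u, hu, v, hv, key⟩ := (hW i).2 w hw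
    obtain ⟨b, hb, hYb⟩ := hf i x a u hx hu
    obtain ⟨c, hc, hZc⟩ := hg i (f.1 i x) b v hYb hv
    refine ⟨c, key a c ?_, hZc⟩
    rw [eval_comp_term, hb]
    simpa using hc⟩
  id_comp f := Subtype.ext rfl
  comp_id f := Subtype.ext rfl
  assoc f g h := Subtype.ext rfl

/-- `(A,φ)` is absolute (i.e. `φ` is the maximal filter of all nonempty
subsets) iff for every assembly `X` and every `x ∈ |X|`, the constant function at `x` is a
morphism of assemblies `∇1 → X`; equivalently, `Γ` commutes with global sections. -/
theorem statement2 (A : Type) (P : PCA A) :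
    P.filt = {U : Set A | U.Nonempty} ↔
      ∀ (X : Asm P) (x : X.carrier),
        ∃ U ∈ P.filt, Tracks P (X := nablaObj P PUnit) (Y := X) U fun _ => x := by
  constructor
  · intro hmax X x
    obtain ⟨a, ha⟩ := X.total x
    obtain ⟨K, hK, hreal⟩ := P.complete 1 (.var 0)
    have haf : ({a} : Set A) ∈ P.filt := by rw [hmax]; exact ⟨a, rfl⟩
    have hdef : SubDef P.app K {a} := by
      intro r hr b hb
      have := (hreal r hr ![b, b]).1
      simpa [appVec] using this
    refine ⟨SubApp P.app K {a}, P.isFilter.appClosed K hK _ haf hdef, ?_⟩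
    rintro _ b w _ ⟨r, hr, c, hc, hrc⟩
    rw [Set.mem_singleton_iff] at hc
    subst hc
    have h2 := (hreal r hr ![c, b]).2 c (by simp [Term.eval])
    refine ⟨c, ?_, ha⟩
    have : appVec P.app r 2 ![c, b]
        = (P.app r c).bind fun s => P.app s b := by
      simp [appVec]
    rw [this, hrc] at h2
    simpa using h2
  · intro h
    ext U
    simp only [Set.mem_setOf_eq]
    constructor
    · exact fun hU => P.isFilter.nonempty U hU
    · rintro ⟨a, ha⟩
      set X : Asm P := ⟨PUnit, fun _ b => b ∈ U, fun _ => ⟨a, ha⟩⟩ with hX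
      obtain ⟨W, hW, htr⟩ := h X PUnit.unit
      have hdef : SubDef P.app W Set.univ := by
        intro r hr b _
        obtain ⟨c, hc, -⟩ := htr PUnit.unit b r trivial hr
        simp [hc]
      have hsub : SubApp P.app W Set.univ ⊆ U := by
        rintro c ⟨r, hr, b, -, hrb⟩
        obtain ⟨c', hc', hc'U⟩ := htr PUnit.unit b r trivial hr
        rw [hrb] at hc'
        injection hc' with h'
        exact h' ▸ hc'U
      exact P.isFilter.upward _
        (P.isFilter.appClosed W hW _ (univ_mem_filt P) hdef) U hsub

end PcaPaper
end

section
/- Let A be a PAS over Set, let G be a combinatorially complete set of nonempty subsets of A, let (B,ψ) be a PCA over Set, and let f ⊆ A × B be an applicative premorphism from A to (B,ψ) (i.e., f is total and some U ∈ ψ tracks f). Then f is an applicative morphism (A,⟨G⟩) → (B,ψ) if and only if f(U) ∈ ψ for every U ∈ G. -/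
open CategoryTheory

namespace PcaPaper

variable {A B C : Type}

/-- If `G` is a combinatorially complete set of nonempty subsets of a PAS
`A`, `(B,ψ)` is a PCA and `f` is an applicative premorphism `A → (B,ψ)` (total and tracked),
then `f` is an applicative morphism `(A,⟨G⟩) → (B,ψ)` iff `f(U) ∈ ψ` for every `U ∈ G`. -/
theorem statement4 (A B : Type) (hA : Nonempty A) (appA : PApp A) (G : Set (Set A))
    (hGne : ∀ U ∈ G, U.Nonempty) (hG : CombComplete appA G)
    (Q : PCA B) (f : A → B → Prop)
    (htotal : ∀ a, ∃ b, f a b)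
    (htracked : ∃ U ∈ Q.filt, Tracks₂ appA Q.app U f) :
    IsAppMor appA (genFilter appA G) Q.app Q.filt f ↔
      ∀ U ∈ G, relImage f U ∈ Q.filt := by
  constructor
  · intro hf U hU
    exact hf.image U (Set.mem_sInter.mpr fun Ψ hΨ => hΨ.2 hU)
  · intro him
    obtain ⟨T, hT, hTf⟩ := htracked
    set Φ : Set (Set A) := {V | relImage f V ∈ Q.filt} with hΦdef
    have hfilter : IsPcaFilter appA Φ := by
      constructor
      · intro V hV
        obtain ⟨b, a, ha, -⟩ := Q.isFilter.nonempty _ hV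
        exact ⟨a, ha⟩
      · intro V hV W hVW
        exact Q.isFilter.upward _ hV _ (fun b ⟨a, ha, hab⟩ => ⟨a, hVW ha, hab⟩)
      · intro V hV W hW hdef
        -- hV : relImage f V ∈ Q.filt, etc.
        have hfWne : (relImage f W).Nonempty := Q.isFilter.nonempty _ hW
        have hdef1 : SubDef Q.app T (relImage f V) := by
          rintro r hr b ⟨a, ha, hab⟩
          obtain ⟨b0, a0, ha0, ha0b⟩ := hfWne
          obtain ⟨c, hc⟩ := Option.isSome_iff_exists.mp (hdef a ha a0 ha0)
          obtain ⟨d, e, hd, -, -⟩ := hTf a a0 c hc b b0 hab ha0b r hr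
          simp [hd]
        have hS1 : SubApp Q.app T (relImage f V) ∈ Q.filt :=
          Q.isFilter.appClosed T hT _ hV hdef1
        have hdef2 : SubDef Q.app (SubApp Q.app T (relImage f V)) (relImage f W) := by
          rintro d ⟨r, hr, b, ⟨a, ha, hab⟩, hrb⟩ b' ⟨a', ha', hab'⟩
          obtain ⟨c, hc⟩ := Option.isSome_iff_exists.mp (hdef a ha a' ha')
          obtain ⟨d', e, hd', he, -⟩ := hTf a a' c hc b b' hab hab' r hr
          rw [hrb] at hd'
          injection hd' with h
          subst h
          simp [he]
        have hS2 : SubApp Q.app (SubApp Q.app T (relImage f V)) (relImage f W) ∈ Q.filt :=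
          Q.isFilter.appClosed _ hS1 _ hW hdef2
        refine Q.isFilter.upward _ hS2 _ ?_
        rintro e ⟨d, ⟨r, hr, b, ⟨a, ha, hab⟩, hrb⟩, b', ⟨a', ha', hab'⟩, hdb'⟩
        obtain ⟨c, hc⟩ := Option.isSome_iff_exists.mp (hdef a ha a' ha')
        obtain ⟨d', e', hd', he', hfe'⟩ := hTf a a' c hc b b' hab hab' r hr
        rw [hrb] at hd'
        injection hd' with h
        subst h
        rw [hdb'] at he'
        injection he' with h
        subst h
        exact ⟨c, ⟨a, ha, a', ha', hc⟩, hfe'⟩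
    refine ⟨htotal, ⟨T, hT, hTf⟩, fun V hV => ?_⟩
    exact Set.mem_sInter.mp hV Φ ⟨hfilter, him⟩

end PcaPaper
end

section
/- Let (A,φ) and (B,ψ) be PCAs over Set. Equip A × B with the coordinatewise partial application and let φ×ψ = {U × V | U ∈ φ, V ∈ ψ}. Then (A × B, ⟨φ×ψ⟩) is a PCA over Set, the relations κ₀ = {(a,(a,b)) | a ∈ A, b ∈ B} and κ₁ = {(b,(a,b)) | a ∈ A, b ∈ B} are applicative morphisms from (A,φ) and (B,ψ) respectively, and (A × B, ⟨φ×ψ⟩) is a pseudocoproduct: for all applicative morphisms f: (A,φ) → (C,χ) and g: (B,ψ) → (C,χ) there is an applicative morphism h: (A × B, ⟨φ×ψ⟩) → (C,χ) with h∘κ₀ ≤ f, f ≤ h∘κ₀, h∘κ₁ ≤ g and g ≤ h∘κ₁; and for any applicative morphisms h,k: (A × B, ⟨φ×ψ⟩) → (C,χ) with h∘κ₀ ≤ k∘κ₀ and h∘κ₁ ≤ k∘κ₁, one has h ≤ k. -/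
open CategoryTheory

namespace PcaPaper

variable {A B C : Type}

/- ### Auxiliary lemmas for Statement 5 -/

section Stmt5Aux

variable {A B C : Type}

lemma appVec_snoc (app : PApp A) (r : A) (k : ℕ) (u : Fin k → A) (x : A) :
    appVec app r (k + 1) (Fin.snoc u x) = (appVec app r k u).bind fun s => app s x := by
  simp only [appVec, Fin.snoc_castSucc, Fin.snoc_last]

lemma isSome_appVec_castLE (app : PApp A) (r : A) :
    ∀ {k j : ℕ} (h : j ≤ k) (a : Fin k → A),
      (appVec app r k a).isSome → (appVec app r j fun i => a (Fin.castLE h i)).isSome := by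
  intro k
  induction k with
  | zero =>
    intro j h a ha
    obtain rfl : j = 0 := Nat.le_zero.mp h
    simpa using ha
  | succ k ih =>
    intro j h a ha
    rcases Nat.lt_or_ge j (k + 1) with hj | hj
    · have hj' : j ≤ k := Nat.lt_succ_iff.mp hj
      have h1 : (appVec app r k fun i => a i.castSucc).isSome := by
        apply isSome_bind_left (f := fun s => app s (a (Fin.last k)))
        simpa only [appVec] using ha
      have h2 := ih hj' (fun i => a i.castSucc) h1
      have he : (fun i => a ((Fin.castLE hj' i).castSucc)) = fun i => a (Fin.castLE h i) :=
        funext fun i => congrArg a (Fin.ext rfl)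
      rwa [he] at h2
    · obtain rfl : j = k + 1 := le_antisymm h hj
      have he : (fun i => a (Fin.castLE h i)) = a := funext fun i => congrArg a (Fin.ext rfl)
      rwa [he]

lemma realizes_appVec_isSome {P : PCA A} {T : Set A} {n : ℕ} {t : Term (n + 1)}
    (hreal : Realizes P.app T t) {r : A} (hr : r ∈ T) {m : ℕ} (hm : m ≤ n) (u : Fin m → A) :
    (appVec P.app r m u).isSome := by
  obtain ⟨a0⟩ := P.nonemptyCarrier
  set a : Fin (n + 1) → A := fun i => if h : i.1 < m then u ⟨i.1, h⟩ else a0 with ha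
  have h1 := (hreal r hr a).1
  have h2 := isSome_appVec_castLE P.app r hm (fun i => a i.castSucc) h1
  have he : (fun i : Fin m => a ((Fin.castLE hm i).castSucc)) = u := by
    funext i
    simp only [ha]
    rw [dif_pos (show ((Fin.castLE hm i).castSucc : Fin (n + 1)).1 < m from i.2)]
    rfl
  rwa [he] at h2

/-- Iterated application of a set to a vector of sets. -/
def appSets (app : PApp A) (T : Set A) : (k : ℕ) → (Fin k → Set A) → Set A
  | 0, _ => T
  | k + 1, U => SubApp app (appSets app T k fun i => U i.castSucc) (U (Fin.last k))

lemma mem_appSets (app : PApp A) (T : Set A) :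
    ∀ (k : ℕ) (U : Fin k → Set A) (c : A),
      c ∈ appSets app T k U ↔
        ∃ r ∈ T, ∃ u : Fin k → A, (∀ i, u i ∈ U i) ∧ appVec app r k u = some c := by
  intro k
  induction k with
  | zero =>
    intro U c
    constructor
    · intro hc
      exact ⟨c, hc, fun i => i.elim0, fun i => i.elim0, rfl⟩
    · rintro ⟨r, hr, u, hu, h⟩
      obtain rfl : r = c := by simpa [appVec] using h
      exact hr
  | succ k ih =>
    intro U c
    constructor
    · rintro ⟨s, hs, v, hv, hsv⟩
      rw [ih] at hs
      obtain ⟨r, hr, u', hu', hru⟩ := hs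
      refine ⟨r, hr, Fin.snoc u' v, fun i => ?_, ?_⟩
      · refine Fin.lastCases ?_ (fun j => ?_) i
        · simpa using hv
        · simpa using hu' j
      · rw [appVec_snoc, hru]
        simpa using hsv
    · rintro ⟨r, hr, u, hu, hru⟩
      have hdec : appVec app r (k + 1) u
          = (appVec app r k fun i => u i.castSucc).bind fun s => app s (u (Fin.last k)) := rfl
      rw [hdec] at hru
      obtain ⟨s, hs1, hs2⟩ := Option.bind_eq_some_iff.mp hru
      refine ⟨s, ?_, u (Fin.last k), hu _, hs2⟩
      rw [ih]
      exact ⟨r, hr, fun i => u i.castSucc, fun i => hu _, hs1⟩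

lemma appSets_mem_filt (P : PCA A) {T : Set A} (hT : T ∈ P.filt) :
    ∀ (k : ℕ) (U : Fin k → Set A), (∀ i, U i ∈ P.filt) →
      (∀ r ∈ T, ∀ m, m ≤ k → ∀ u : Fin m → A, (appVec P.app r m u).isSome) →
      appSets P.app T k U ∈ P.filt := by
  intro k
  induction k with
  | zero => intro _ _ _; exact hT
  | succ k ih =>
    intro U hU hdef
    refine P.isFilter.appClosed _
      (ih _ (fun i => hU _) fun r hr m hm u => hdef r hr m (hm.trans (Nat.le_succ k)) u)
      _ (hU (Fin.last k)) ?_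
    intro s hs v _
    rw [mem_appSets] at hs
    obtain ⟨r, hr, u, hu, hru⟩ := hs
    have h1 := hdef r hr (k + 1) le_rfl (Fin.snoc u v)
    rw [appVec_snoc, hru] at h1
    simpa using h1

lemma exists_trackerN1 (P : PCA A) {n : ℕ} (t : Term (n + 1)) (U : Fin n → Set A)
    (hU : ∀ i, U i ∈ P.filt) :
    ∃ W ∈ P.filt, ∀ w ∈ W, ∃ u : Fin n → A, (∀ i, u i ∈ U i) ∧
      ∀ x c, Term.eval P.app t (Fin.snoc u x) = some c → P.app w x = some c := by
  obtain ⟨T, hT, hreal⟩ := P.complete n t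
  have hdef : ∀ r ∈ T, ∀ m, m ≤ n → ∀ u : Fin m → A, (appVec P.app r m u).isSome :=
    fun r hr m hm u => realizes_appVec_isSome hreal hr hm u
  refine ⟨appSets P.app T n U, appSets_mem_filt P hT n U hU hdef, fun w hw => ?_⟩
  rw [mem_appSets] at hw
  obtain ⟨r, hr, u, hu, hru⟩ := hw
  refine ⟨u, hu, fun x c hc => ?_⟩
  have h2 := (hreal r hr (Fin.snoc u x)).2 c hc
  rw [appVec_snoc, hru] at h2
  simpa using h2

lemma exists_trackerN2 (P : PCA A) {n : ℕ} (t : Term (n + 1 + 1)) (U : Fin n → Set A)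
    (hU : ∀ i, U i ∈ P.filt) :
    ∃ W ∈ P.filt, ∀ w ∈ W, ∃ u : Fin n → A, (∀ i, u i ∈ U i) ∧
      ∀ x y c, Term.eval P.app t (Fin.snoc (Fin.snoc u x) y) = some c →
        ∃ d, P.app w x = some d ∧ P.app d y = some c := by
  obtain ⟨T, hT, hreal⟩ := P.complete (n + 1) t
  have hdef : ∀ r ∈ T, ∀ m, m ≤ n + 1 → ∀ u : Fin m → A, (appVec P.app r m u).isSome :=
    fun r hr m hm u => realizes_appVec_isSome hreal hr hm u
  refine ⟨appSets P.app T n U,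
    appSets_mem_filt P hT n U hU (fun r hr m hm u => hdef r hr m (hm.trans (Nat.le_succ n)) u),
    fun w hw => ?_⟩
  rw [mem_appSets] at hw
  obtain ⟨r, hr, u, hu, hru⟩ := hw
  refine ⟨u, hu, fun x y c hc => ?_⟩
  have h2 := (hreal r hr (Fin.snoc (Fin.snoc u x) y)).2 c hc
  rw [appVec_snoc, appVec_snoc, hru] at h2
  simp only [Option.bind_some] at h2
  obtain ⟨d, hd1, hd2⟩ := Option.bind_eq_some_iff.mp h2
  exact ⟨d, hd1, hd2⟩

end Stmt5Aux


section Stmt5Prod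

variable {A B C : Type}

/-- Zip of two options. -/
def ozip {A B : Type} (o : Option A) (p : Option B) : Option (A × B) :=
  o.bind fun x => p.map fun y => (x, y)

lemma ozip_isSome {o : Option A} {p : Option B} :
    (ozip o p).isSome ↔ o.isSome ∧ p.isSome := by
  cases o <;> cases p <;> simp [ozip]

lemma ozip_eq_some {o : Option A} {p : Option B} {c : A × B} :
    ozip o p = some c ↔ o = some c.1 ∧ p = some c.2 := by
  cases o <;> cases p <;> simp [ozip, Prod.ext_iff]

lemma prodApp_eq (pa : PApp A) (pb : PApp B) (p q : A × B) :
    prodApp pa pb p q = ozip (pa p.1 q.1) (pb p.2 q.2) := by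
  simp only [prodApp, ozip]
  cases pa p.1 q.1 <;> cases pb p.2 q.2 <;> rfl

lemma eval_prod (pa : PApp A) (pb : PApp B) :
    ∀ {n : ℕ} (t : Term n) (ρ : Fin n → A × B),
      Term.eval (prodApp pa pb) t ρ
        = ozip (Term.eval pa t fun i => (ρ i).1) (Term.eval pb t fun i => (ρ i).2) := by
  intro n t
  induction t with
  | var i => intro ρ; simp [Term.eval, ozip]
  | op s t ihs iht =>
    intro ρ
    simp only [Term.eval, ihs, iht]
    rcases Term.eval pa s fun i => (ρ i).1 with _ | x1 <;>
      rcases Term.eval pb s fun i => (ρ i).2 with _ | y1 <;>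
      rcases Term.eval pa t fun i => (ρ i).1 with _ | x2 <;>
      rcases Term.eval pb t fun i => (ρ i).2 with _ | y2 <;>
      simp [ozip, prodApp_eq]

lemma appVec_prod (pa : PApp A) (pb : PApp B) (r : A × B) :
    ∀ (k : ℕ) (a : Fin k → A × B),
      appVec (prodApp pa pb) r k a
        = ozip (appVec pa r.1 k fun i => (a i).1) (appVec pb r.2 k fun i => (a i).2) := by
  intro k
  induction k with
  | zero => intro a; simp [appVec, ozip]
  | succ k ih =>
    intro a
    show (appVec (prodApp pa pb) r k fun i => a i.castSucc).bind
        (fun s => prodApp pa pb s (a (Fin.last k))) = _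
    rw [ih]
    have hA : appVec pa r.1 (k + 1) (fun i => (a i).1)
        = (appVec pa r.1 k fun i => (a i.castSucc).1).bind
            fun s => pa s ((a (Fin.last k)).1) := rfl
    have hB : appVec pb r.2 (k + 1) (fun i => (a i).2)
        = (appVec pb r.2 k fun i => (a i.castSucc).2).bind
            fun s => pb s ((a (Fin.last k)).2) := rfl
    rw [hA, hB]
    cases appVec pa r.1 k fun i => (a i.castSucc).1 with
    | none => simp [ozip]
    | some s1 =>
      cases appVec pb r.2 k fun i => (a i.castSucc).2 with
      | none => simp [ozip]
      | some s2 => simp [ozip, prodApp_eq]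

/-- The upward closure of the rectangles. -/
def prodUp (P : PCA A) (Q : PCA B) : Set (Set (A × B)) :=
  {W | ∃ U ∈ P.filt, ∃ V ∈ Q.filt, U ×ˢ V ⊆ W}

lemma prodUp_isFilter (P : PCA A) (Q : PCA B) :
    IsPcaFilter (prodApp P.app Q.app) (prodUp P Q) := by
  constructor
  · rintro W ⟨U, hU, V, hV, hsub⟩
    obtain ⟨a, ha⟩ := P.isFilter.nonempty U hU
    obtain ⟨b, hb⟩ := Q.isFilter.nonempty V hV
    exact ⟨(a, b), hsub ⟨ha, hb⟩⟩
  · rintro W ⟨U, hU, V, hV, hsub⟩ W' hWW'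
    exact ⟨U, hU, V, hV, hsub.trans hWW'⟩
  · rintro W ⟨U, hU, V, hV, hsub⟩ W' ⟨U', hU', V', hV', hsub'⟩ hdef
    obtain ⟨b0, hb0⟩ := Q.isFilter.nonempty V hV
    obtain ⟨b0', hb0'⟩ := Q.isFilter.nonempty V' hV'
    obtain ⟨a0, ha0⟩ := P.isFilter.nonempty U hU
    obtain ⟨a0', ha0'⟩ := P.isFilter.nonempty U' hU'
    have hUU' : SubDef P.app U U' := by
      intro a ha a' ha'
      have := hdef (a, b0) (hsub ⟨ha, hb0⟩) (a', b0') (hsub' ⟨ha', hb0'⟩)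
      rw [prodApp_eq, ozip_isSome] at this
      exact this.1
    have hVV' : SubDef Q.app V V' := by
      intro b hb b' hb'
      have := hdef (a0, b) (hsub ⟨ha0, hb⟩) (a0', b') (hsub' ⟨ha0', hb'⟩)
      rw [prodApp_eq, ozip_isSome] at this
      exact this.2
    refine ⟨SubApp P.app U U', P.isFilter.appClosed U hU U' hU' hUU',
      SubApp Q.app V V', Q.isFilter.appClosed V hV V' hV' hVV', ?_⟩
    rintro ⟨c, d⟩ ⟨⟨a, ha, a', ha', hc⟩, ⟨b, hb, b', hb', hd⟩⟩
    refine ⟨(a, b), hsub ⟨ha, hb⟩, (a', b'), hsub' ⟨ha', hb'⟩, ?_⟩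
    rw [prodApp_eq, ozip_eq_some]
    exact ⟨hc, hd⟩

lemma prodFilt_eq_prodUp (P : PCA A) (Q : PCA B) : prodFilt P Q = prodUp P Q := by
  apply subset_antisymm
  · intro W hW
    exact hW _ ⟨prodUp_isFilter P Q,
      fun X => by rintro ⟨U, hU, V, hV, rfl⟩; exact ⟨U, hU, V, hV, subset_rfl⟩⟩
  · rintro W ⟨U, hU, V, hV, hsub⟩ Ψ ⟨hΨ, hG⟩
    exact hΨ.upward _ (hG ⟨U, hU, V, hV, rfl⟩) _ hsub

lemma prodFilt_isFilter (P : PCA A) (Q : PCA B) :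
    IsPcaFilter (prodApp P.app Q.app) (prodFilt P Q) := by
  rw [prodFilt_eq_prodUp]; exact prodUp_isFilter P Q

lemma rect_mem_prodFilt (P : PCA A) (Q : PCA B) {U : Set A} {V : Set B}
    (hU : U ∈ P.filt) (hV : V ∈ Q.filt) : U ×ˢ V ∈ prodFilt P Q := by
  rw [prodFilt_eq_prodUp]; exact ⟨U, hU, V, hV, subset_rfl⟩

lemma prod_complete (P : PCA A) (Q : PCA B) :
    CombComplete (prodApp P.app Q.app) (prodFilt P Q) := by
  intro n t
  obtain ⟨U, hU, hrU⟩ := P.complete n t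
  obtain ⟨V, hV, hrV⟩ := Q.complete n t
  refine ⟨U ×ˢ V, rect_mem_prodFilt P Q hU hV, ?_⟩
  rintro ⟨r1, r2⟩ ⟨hr1, hr2⟩ a
  constructor
  · rw [appVec_prod, ozip_isSome]
    exact ⟨(hrU r1 hr1 fun i => (a i).1).1, (hrV r2 hr2 fun i => (a i).2).1⟩
  · intro c hc
    rw [eval_prod] at hc
    obtain ⟨h1, h2⟩ := ozip_eq_some.mp hc
    rw [appVec_prod, ozip_eq_some]
    exact ⟨(hrU r1 hr1 fun i => (a i).1).2 c.1 h1, (hrV r2 hr2 fun i => (a i).2).2 c.2 h2⟩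

end Stmt5Prod


section Stmt5Comb

variable {A B C : Type}

lemma appVec_two_cons (app : PApp A) (r a b : A) :
    appVec app r (1 + 1) ![a, b] = (app r a).bind fun d => app d b := rfl

lemma appVec_one_pre (app : PApp A) (r a b : A) :
    appVec app r 1 (fun i => (![a, b] : Fin 2 → A) i.castSucc) = app r a := rfl

/-- A realizer set for `λ x y. x y`. -/
lemma exists_app_realizer (P : PCA A) :
    ∃ U ∈ P.filt, ∀ r ∈ U, ∀ a a' : A, (P.app r a).isSome ∧
      ∀ c, P.app a a' = some c → ∃ d, P.app r a = some d ∧ P.app d a' = some c := by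
  obtain ⟨U, hU, hreal⟩ := P.complete 1 (Term.op (.var 0) (.var 1))
  refine ⟨U, hU, fun r hr a a' => ⟨?_, fun c hc => ?_⟩⟩
  · have h := (hreal r hr ![a, a']).1
    rwa [appVec_one_pre] at h
  · have h := (hreal r hr ![a, a']).2 c (by simpa [Term.eval] using hc)
    rw [appVec_two_cons] at h
    exact Option.bind_eq_some_iff.mp h

/-- A realizer set for `λ x y. x`. -/
lemma exists_fst_realizer (P : PCA A) :
    ∃ U ∈ P.filt, ∀ r ∈ U, ∀ a a' : A,
      ∃ d, P.app r a = some d ∧ P.app d a' = some a := by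
  obtain ⟨U, hU, hreal⟩ := P.complete 1 (Term.var 0)
  refine ⟨U, hU, fun r hr a a' => ?_⟩
  have h := (hreal r hr ![a, a']).2 a (by simp [Term.eval])
  rw [appVec_two_cons] at h
  exact Option.bind_eq_some_iff.mp h

/-- A realizer set for `λ x y. y`. -/
lemma exists_snd_realizer (P : PCA A) :
    ∃ U ∈ P.filt, ∀ r ∈ U, ∀ a a' : A,
      ∃ d, P.app r a = some d ∧ P.app d a' = some a' := by
  obtain ⟨U, hU, hreal⟩ := P.complete 1 (Term.var 1)
  refine ⟨U, hU, fun r hr a a' => ?_⟩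
  have h := (hreal r hr ![a, a']).2 a' (by simp [Term.eval])
  rw [appVec_two_cons] at h
  exact Option.bind_eq_some_iff.mp h

/-- A realizer set for the pairing `λ x y z. z x y`. -/
lemma exists_pair_realizer (P : PCA A) :
    ∃ U ∈ P.filt, ∀ r ∈ U, ∀ x y : A,
      ((P.app r x).bind fun d => P.app d y).isSome ∧
      ∀ z c : A, ((P.app z x).bind fun d => P.app d y) = some c →
        (((P.app r x).bind fun d => P.app d y).bind fun d => P.app d z) = some c := by
  obtain ⟨U, hU, hreal⟩ := P.complete 2 (Term.op (.op (.var 2) (.var 0)) (.var 1))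
  refine ⟨U, hU, fun r hr x y => ⟨?_, fun z c hc => ?_⟩⟩
  · have h := (hreal r hr ![x, y, y]).1
    rwa [appVec_two_pre] at h
  · have h := (hreal r hr ![x, y, z]).2 c (by simpa [Term.eval] using hc)
    rwa [appVec_three_cons] at h

end Stmt5Comb


section Stmt5Kappa

variable {A B C : Type}

lemma snoc_eq_cons5 {C : Type} (u : Fin 4 → C) (x : C) :
    (Fin.snoc u x : Fin 5 → C) = ![u 0, u 1, u 2, u 3, x] := by
  funext i
  fin_cases i <;>
    simp (config := { decide := true }) [Fin.snoc, Matrix.cons_val_succ, Matrix.cons_val_zero] <;>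
    first
      | rfl
      | exact congrArg u (by decide)

lemma snoc_eq_cons7 {C : Type} (u : Fin 5 → C) (x y : C) :
    (Fin.snoc (Fin.snoc u x) y : Fin 7 → C) = ![u 0, u 1, u 2, u 3, u 4, x, y] := by
  funext i
  fin_cases i <;>
    simp (config := { decide := true }) [Fin.snoc, Matrix.cons_val_succ, Matrix.cons_val_zero] <;>
    first
      | rfl
      | exact congrArg u (by decide)

lemma kappa0_appMor (P : PCA A) (Q : PCA B) :
    IsAppMor P.app P.filt (prodApp P.app Q.app) (prodFilt P Q) (fun a p => p.1 = a) := by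
  obtain ⟨b0⟩ := Q.nonemptyCarrier
  obtain ⟨U, hU, hUs⟩ := exists_app_realizer P
  obtain ⟨V, hV, hVs⟩ := exists_snd_realizer Q
  refine ⟨fun a => ⟨(a, b0), rfl⟩, ⟨U ×ˢ V, rect_mem_prodFilt P Q hU hV, ?_⟩, ?_⟩
  · rintro a a' c hc p p' rfl rfl r ⟨hr1, hr2⟩
    obtain ⟨d1, hd1, hd1'⟩ := (hUs r.1 hr1 p.1 p'.1).2 c hc
    obtain ⟨d2, hd2, hd2'⟩ := hVs r.2 hr2 p.2 p'.2
    refine ⟨(d1, d2), (c, p'.2), ?_, ?_, rfl⟩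
    · rw [prodApp_eq, ozip_eq_some]; exact ⟨hd1, hd2⟩
    · rw [prodApp_eq, ozip_eq_some]; exact ⟨hd1', hd2'⟩
  · intro V' hV'
    rw [prodFilt_eq_prodUp]
    refine ⟨V', hV', Set.univ, univ_mem_filt Q, ?_⟩
    rintro ⟨a, b⟩ ⟨ha, -⟩
    exact ⟨a, ha, rfl⟩

lemma kappa1_appMor (P : PCA A) (Q : PCA B) :
    IsAppMor Q.app Q.filt (prodApp P.app Q.app) (prodFilt P Q) (fun b p => p.2 = b) := by
  obtain ⟨a0⟩ := P.nonemptyCarrier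
  obtain ⟨U, hU, hUs⟩ := exists_snd_realizer P
  obtain ⟨V, hV, hVs⟩ := exists_app_realizer Q
  refine ⟨fun b => ⟨(a0, b), rfl⟩, ⟨U ×ˢ V, rect_mem_prodFilt P Q hU hV, ?_⟩, ?_⟩
  · rintro b b' c hc p p' rfl rfl r ⟨hr1, hr2⟩
    obtain ⟨d1, hd1, hd1'⟩ := hUs r.1 hr1 p.1 p'.1
    obtain ⟨d2, hd2, hd2'⟩ := (hVs r.2 hr2 p.2 p'.2).2 c hc
    refine ⟨(d1, d2), (p'.1, c), ?_, ?_, rfl⟩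
    · rw [prodApp_eq, ozip_eq_some]; exact ⟨hd1, hd2⟩
    · rw [prodApp_eq, ozip_eq_some]; exact ⟨hd1', hd2'⟩
  · intro V' hV'
    rw [prodFilt_eq_prodUp]
    refine ⟨Set.univ, univ_mem_filt P, V', hV', ?_⟩
    rintro ⟨a, b⟩ ⟨-, hb⟩
    exact ⟨b, hb, rfl⟩

end Stmt5Kappa


section Stmt5Main

lemma pseudocoproduct_exists {A B : Type} (P : PCA A) (Q : PCA B) (C : Type) (R : PCA C)
    (f : A → C → Prop) (g : B → C → Prop)
    (hf : IsAppMor P.app P.filt R.app R.filt f)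
    (hg : IsAppMor Q.app Q.filt R.app R.filt g) :
    ∃ h : A × B → C → Prop,
      IsAppMor (prodApp P.app Q.app) (prodFilt P Q) R.app R.filt h ∧
      RelLe R.app R.filt (RelComp h fun a p => p.1 = a) f ∧
      RelLe R.app R.filt f (RelComp h fun a p => p.1 = a) ∧
      RelLe R.app R.filt (RelComp h fun b p => p.2 = b) g ∧
      RelLe R.app R.filt g (RelComp h fun b p => p.2 = b) := by
  obtain ⟨TP, hTP, hTPs⟩ := exists_pair_realizer R
  obtain ⟨K, hK, hKs⟩ := exists_fst_realizer R
  obtain ⟨K', hK', hK's⟩ := exists_snd_realizer R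
  obtain ⟨Uf, hUf, hUfT⟩ := hf.tracked
  obtain ⟨Ug, hUg, hUgT⟩ := hg.tracked
  set hmor : A × B → C → Prop := fun p c => ∃ c1 c2 r, f p.1 c1 ∧ g p.2 c2 ∧ r ∈ TP ∧
      ((R.app r c1).bind fun d => R.app d c2) = some c with hmor_def
  have hproj1 : ∀ p c, hmor p c → ∀ kk ∈ K, ∃ c1, R.app c kk = some c1 ∧ f p.1 c1 := by
    rintro p c ⟨c1, c2, r, hf1, hg1, hrT, hch⟩ kk hkk
    obtain ⟨d, hd, hd'⟩ := hKs kk hkk c1 c2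
    have h2 := (hTPs r hrT c1 c2).2 kk c1 (by rw [hd]; simpa using hd')
    rw [hch] at h2
    exact ⟨c1, by simpa using h2, hf1⟩
  have hproj2 : ∀ p c, hmor p c → ∀ kk ∈ K', ∃ c2, R.app c kk = some c2 ∧ g p.2 c2 := by
    rintro p c ⟨c1, c2, r, hf1, hg1, hrT, hch⟩ kk hkk
    obtain ⟨d, hd, hd'⟩ := hK's kk hkk c1 c2
    have h2 := (hTPs r hrT c1 c2).2 kk c2 (by rw [hd]; simpa using hd')
    rw [hch] at h2
    exact ⟨c2, by simpa using h2, hg1⟩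
  refine ⟨hmor, ⟨?_, ?_, ?_⟩, ?_, ?_, ?_, ?_⟩
  · -- total
    intro p
    obtain ⟨c1, hc1⟩ := hf.total p.1
    obtain ⟨c2, hc2⟩ := hg.total p.2
    obtain ⟨r, hr⟩ := R.isFilter.nonempty TP hTP
    obtain ⟨c, hc⟩ := Option.isSome_iff_exists.mp (hTPs r hr c1 c2).1
    exact ⟨c, c1, c2, r, hc1, hc2, hr, hc⟩
  · -- tracked
    obtain ⟨W, hW, hWs⟩ := exists_trackerN2 R
      (Term.op (.op (.var 2) (.op (.op (.var 0) (.op (.var 5) (.var 3))) (.op (.var 6) (.var 3))))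
        (.op (.op (.var 1) (.op (.var 5) (.var 4))) (.op (.var 6) (.var 4))))
      ![Uf, Ug, TP, K, K'] (by intro i; fin_cases i <;> assumption)
    refine ⟨W, hW, ?_⟩
    rintro p p' pp hpp c c' hc hc' w hw
    obtain ⟨u, hu, key⟩ := hWs w hw
    rw [prodApp_eq, ozip_eq_some] at hpp
    obtain ⟨ha2, hb2⟩ := hpp
    obtain ⟨c1f, hck, hfc1⟩ := hproj1 p c hc (u 3) (by simpa using hu 3)
    obtain ⟨c1', hc'k, hfc1'⟩ := hproj1 p' c' hc' (u 3) (by simpa using hu 3)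
    obtain ⟨c2f, hck', hgc2⟩ := hproj2 p c hc (u 4) (by simpa using hu 4)
    obtain ⟨c2', hc'k', hgc2'⟩ := hproj2 p' c' hc' (u 4) (by simpa using hu 4)
    obtain ⟨df, ef, hdf, hdf', hfe⟩ :=
      hUfT p.1 p'.1 pp.1 ha2 c1f c1' hfc1 hfc1' (u 0) (by simpa using hu 0)
    obtain ⟨dg, eg, hdg, hdg', hge⟩ :=
      hUgT p.2 p'.2 pp.2 hb2 c2f c2' hgc2 hgc2' (u 1) (by simpa using hu 1)
    obtain ⟨E, hE⟩ := Option.isSome_iff_exists.mp (hTPs (u 2) (by simpa using hu 2) ef eg).1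
    obtain ⟨dE, hdE1, hdE2⟩ := Option.bind_eq_some_iff.mp hE
    have heval : Term.eval R.app
        (Term.op (.op (.var 2) (.op (.op (.var 0) (.op (.var 5) (.var 3))) (.op (.var 6) (.var 3))))
          (.op (.op (.var 1) (.op (.var 5) (.var 4))) (.op (.var 6) (.var 4))))
        (Fin.snoc (Fin.snoc u c) c') = some E := by
      rw [snoc_eq_cons7]
      have e5 : (![u 0, u 1, u 2, u 3, u 4, c, c'] : Fin 7 → C) 5 = c := rfl
      have e6 : (![u 0, u 1, u 2, u 3, u 4, c, c'] : Fin 7 → C) 6 = c' := rfl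
      simp [Term.eval, e5, e6, hck, hc'k, hck', hc'k', hdf, hdg, hdf', hdg', hdE1, hdE2]
    obtain ⟨dw, hw1, hw2⟩ := key c c' E heval
    exact ⟨dw, E, hw1, hw2, ef, eg, u 2, hfe, hge, (by simpa using hu 2), hE⟩
  · -- image
    intro V hV
    rw [prodFilt_eq_prodUp] at hV
    obtain ⟨U, hU, V', hV', hsub⟩ := hV
    have h1 : relImage f U ∈ R.filt := hf.image U hU
    have h2 : relImage g V' ∈ R.filt := hg.image V' hV'
    have hS1def : SubDef R.app TP (relImage f U) := by
      rintro r hr c1 -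
      exact isSome_bind_left ((hTPs r hr c1 c1).1)
    have hS1 := R.isFilter.appClosed TP hTP _ h1 hS1def
    have hS2def : SubDef R.app (SubApp R.app TP (relImage f U)) (relImage g V') := by
      rintro s ⟨r, hr, c1, hc1, hrc1⟩ c2 -
      have h3 := (hTPs r hr c1 c2).1
      rw [hrc1] at h3
      simpa using h3
    have hS2 := R.isFilter.appClosed _ hS1 _ h2 hS2def
    refine R.isFilter.upward _ hS2 _ ?_
    rintro e ⟨s, ⟨r, hr, c1, ⟨a, ha, hfa⟩, hrc1⟩, c2, ⟨b, hb, hgb⟩, hse⟩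
    exact ⟨(a, b), hsub ⟨ha, hb⟩, c1, c2, r, hfa, hgb, hr, by rw [hrc1]; simpa using hse⟩
  · -- h ∘ κ₀ ≤ f
    obtain ⟨W, hW, hWs⟩ := exists_tracker3 R (Term.op (.var 2) (.var 0)) hK hK
    refine ⟨W, hW, ?_⟩
    rintro a c ⟨p, hp1, hpc⟩ w hw
    obtain ⟨kk, hkk, v, hv, key⟩ := hWs w hw
    obtain ⟨c1, hck, hfc1⟩ := hproj1 p c hpc kk hkk
    exact ⟨c1, key c c1 (by simpa [Term.eval] using hck), hp1 ▸ hfc1⟩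
  · -- f ≤ h ∘ κ₀
    have hGim : relImage g Set.univ ∈ R.filt := hg.image _ (univ_mem_filt Q)
    obtain ⟨W, hW, hWs⟩ :=
      exists_tracker3 R (Term.op (.op (.var 0) (.var 2)) (.var 1)) hTP hGim
    refine ⟨W, hW, ?_⟩
    intro a c1 hfc1 w hw
    obtain ⟨r, hr, v, ⟨b0, -, hgb0⟩, key⟩ := hWs w hw
    obtain ⟨E, hE⟩ := Option.isSome_iff_exists.mp (hTPs r hr c1 v).1
    exact ⟨E, key c1 E (by simpa [Term.eval] using hE),
      ⟨(a, b0), rfl, c1, v, r, hfc1, hgb0, hr, hE⟩⟩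
  · -- h ∘ κ₁ ≤ g
    obtain ⟨W, hW, hWs⟩ := exists_tracker3 R (Term.op (.var 2) (.var 0)) hK' hK'
    refine ⟨W, hW, ?_⟩
    rintro b c ⟨p, hp2, hpc⟩ w hw
    obtain ⟨kk, hkk, v, hv, key⟩ := hWs w hw
    obtain ⟨c2, hck, hgc2⟩ := hproj2 p c hpc kk hkk
    exact ⟨c2, key c c2 (by simpa [Term.eval] using hck), hp2 ▸ hgc2⟩
  · -- g ≤ h ∘ κ₁
    have hFim : relImage f Set.univ ∈ R.filt := hf.image _ (univ_mem_filt P)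
    obtain ⟨W, hW, hWs⟩ :=
      exists_tracker3 R (Term.op (.op (.var 0) (.var 1)) (.var 2)) hTP hFim
    refine ⟨W, hW, ?_⟩
    intro b c2 hgc2 w hw
    obtain ⟨r, hr, v, ⟨a0, -, hfa0⟩, key⟩ := hWs w hw
    obtain ⟨E, hE⟩ := Option.isSome_iff_exists.mp (hTPs r hr v c2).1
    exact ⟨E, key c2 E (by rw [eval_app2_term]; exact hE),
      ⟨(a0, b), rfl, v, c2, r, hfa0, hgc2, hr, hE⟩⟩

lemma pseudocoproduct_unique {A B : Type} (P : PCA A) (Q : PCA B) (C : Type) (R : PCA C)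
    (h k : A × B → C → Prop)
    (hh : IsAppMor (prodApp P.app Q.app) (prodFilt P Q) R.app R.filt h)
    (hk : IsAppMor (prodApp P.app Q.app) (prodFilt P Q) R.app R.filt k)
    (hle0 : RelLe R.app R.filt (RelComp h fun a p => p.1 = a) (RelComp k fun a p => p.1 = a))
    (hle1 : RelLe R.app R.filt (RelComp h fun b p => p.2 = b) (RelComp k fun b p => p.2 = b)) :
    RelLe R.app R.filt h k := by
  obtain ⟨W0, hW0, hle0s⟩ := hle0
  obtain ⟨W1, hW1, hle1s⟩ := hle1
  obtain ⟨Tk, hTk, hTks⟩ := hk.tracked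
  obtain ⟨KA, hKA, hKAs⟩ := exists_fst_realizer P
  obtain ⟨KB, hKB, hKBs⟩ := exists_snd_realizer Q
  have hEπ : relImage k (KA ×ˢ KB) ∈ R.filt := hk.image _ (rect_mem_prodFilt P Q hKA hKB)
  obtain ⟨W, hW, hWs⟩ := exists_trackerN1 R
    (Term.op (.op (.var 0) (.op (.op (.var 0) (.var 1)) (.op (.var 2) (.var 4))))
      (.op (.var 3) (.var 4)))
    ![Tk, relImage k (KA ×ˢ KB), W0, W1] (by intro i; fin_cases i <;> assumption)
  refine ⟨W, hW, ?_⟩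
  intro p c hpc w hw
  obtain ⟨u, hu, key⟩ := hWs w hw
  obtain ⟨c', hwc0, p1, hp11, hkp1⟩ := hle0s p.1 c ⟨p, rfl, hpc⟩ (u 2) (by simpa using hu 2)
  obtain ⟨c'', hwc1, p2, hp22, hkp2⟩ := hle1s p.2 c ⟨p, rfl, hpc⟩ (u 3) (by simpa using hu 3)
  have hu1 : u 1 ∈ relImage k (KA ×ˢ KB) := by simpa using hu 1
  obtain ⟨π, hπS, hkπ⟩ := hu1
  obtain ⟨da, hda, hda'⟩ := hKAs π.1 hπS.1 p1.1 p2.1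
  obtain ⟨db, hdb, hdb'⟩ := hKBs π.2 hπS.2 p1.2 p2.2
  have hq : prodApp P.app Q.app π p1 = some (da, db) := by
    rw [prodApp_eq, ozip_eq_some]; exact ⟨hda, hdb⟩
  obtain ⟨d1, e1, hd1, hd1', hke1⟩ :=
    hTks π p1 (da, db) hq (u 1) c' hkπ hkp1 (u 0) (by simpa using hu 0)
  have hq2 : prodApp P.app Q.app (da, db) p2 = some p := by
    rw [prodApp_eq, ozip_eq_some]
    refine ⟨?_, ?_⟩
    · show P.app da p2.1 = some p.1
      rw [← hp11]; exact hda'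
    · show Q.app db p2.2 = some p.2
      rw [← hp22]; exact hdb'
  obtain ⟨d2, e2, hd2, hd2', hke2⟩ :=
    hTks (da, db) p2 p hq2 e1 c'' hke1 hkp2 (u 0) (by simpa using hu 0)
  have heval : Term.eval R.app
      (Term.op (.op (.var 0) (.op (.op (.var 0) (.var 1)) (.op (.var 2) (.var 4))))
        (.op (.var 3) (.var 4)))
      (Fin.snoc u c) = some e2 := by
    rw [snoc_eq_cons5]
    have e4 : (![u 0, u 1, u 2, u 3, c] : Fin 5 → C) 4 = c := rfl
    simp [Term.eval, e4, hd1, hd1', hd2, hd2', hwc0, hwc1]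
  exact ⟨e2, key c e2 heval, hke2⟩

end Stmt5Main

/-- The product `A × B` with the coordinatewise application and the filter
`⟨φ × ψ⟩` is a PCA, the coprojections `κ₀, κ₁` are applicative morphisms, and this PCA is a
pseudocoproduct of `(A,φ)` and `(B,ψ)` in the preorder-enriched category of PCAs over `Set`. -/
theorem statement5 (A B : Type) (P : PCA A) (Q : PCA B) :
    IsPcaFilter (prodApp P.app Q.app) (prodFilt P Q) ∧
    CombComplete (prodApp P.app Q.app) (prodFilt P Q) ∧
    IsAppMor P.app P.filt (prodApp P.app Q.app) (prodFilt P Q)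
      (fun a p => p.1 = a) ∧
    IsAppMor Q.app Q.filt (prodApp P.app Q.app) (prodFilt P Q)
      (fun b p => p.2 = b) ∧
    (∀ (C : Type) (R : PCA C) (f : A → C → Prop) (g : B → C → Prop),
      IsAppMor P.app P.filt R.app R.filt f →
      IsAppMor Q.app Q.filt R.app R.filt g →
      ∃ h : A × B → C → Prop,
        IsAppMor (prodApp P.app Q.app) (prodFilt P Q) R.app R.filt h ∧
        RelLe R.app R.filt (RelComp h fun a p => p.1 = a) f ∧
        RelLe R.app R.filt f (RelComp h fun a p => p.1 = a) ∧
        RelLe R.app R.filt (RelComp h fun b p => p.2 = b) g ∧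
        RelLe R.app R.filt g (RelComp h fun b p => p.2 = b)) ∧
    (∀ (C : Type) (R : PCA C) (h k : A × B → C → Prop),
      IsAppMor (prodApp P.app Q.app) (prodFilt P Q) R.app R.filt h →
      IsAppMor (prodApp P.app Q.app) (prodFilt P Q) R.app R.filt k →
      RelLe R.app R.filt (RelComp h fun a p => p.1 = a) (RelComp k fun a p => p.1 = a) →
      RelLe R.app R.filt (RelComp h fun b p => p.2 = b) (RelComp k fun b p => p.2 = b) →
      RelLe R.app R.filt h k) :=
  ⟨prodFilt_isFilter P Q, prod_complete P Q, kappa0_appMor P Q, kappa1_appMor P Q,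
    fun C R f g hf hg => pseudocoproduct_exists P Q C R f g hf hg,
    fun C R h k hh hk hle0 hle1 => pseudocoproduct_unique P Q C R h k hh hk hle0 hle1⟩

end PcaPaper
end

section
/- Let (A,φ) and (B,ψ) be PCAs over Set. Then: (i) for every applicative morphism f: (A,φ) → (B,ψ), Asm(f) is a well-defined functor Asm(A,φ) → Asm(B,ψ); (ii) Asm(δ_A) is the identity functor and Asm(g∘f) = Asm(g)∘Asm(f) for composable applicative morphisms; (iii) if f, g: (A,φ) → (B,ψ) are applicative morphisms with f ≤ g, then the identity functions on underlying sets are the components of a natural transformation Asm(f) ⇒ Asm(g). -/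
open CategoryTheory

namespace PcaPaper

variable {A B C : Type}

lemma asm_eqToHom_val {P : PCA A} {X Y : Asm P} (e : X = Y)
    (h : X.carrier = Y.carrier) : (eqToHom e).1 = fun x => cast h x := by
  subst e
  funext x
  simp
  rfl

lemma asm_ext {P : PCA A} {X Y : Asm P} (hc : X.carrier = Y.carrier)
    (hE : ∀ x b, X.E x b ↔ Y.E (cast hc x) b) : X = Y := by
  cases X; cases Y
  cases hc
  simp only [cast_eq] at hE
  congr 1
  funext x b
  exact propext (hE x b)

lemma asmFunctor_eq_aux {P : PCA A} {Q : PCA B} {f : A → B → Prop}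
    (hf : IsAppMor P.app P.filt Q.app Q.filt f) (F : Asm P ⥤ Asm Q)
    (hobj : ∀ X : Asm P, asmObj P Q f hf.total X = F.obj X)
    (hcar : ∀ X : Asm P, X.carrier = (F.obj X).carrier)
    (hmap : ∀ (X Y : Asm P) (g : X ⟶ Y),
      (F.map g).1 = fun x => cast (hcar Y) (g.1 (cast (hcar X).symm x))) :
    asmFunctor hf = F := by
  refine CategoryTheory.Functor.ext hobj ?_
  intro X Y g
  apply Subtype.ext
  show g.1 = _
  have h1 : (eqToHom (hobj X)).1 = fun x => cast (hcar X) x :=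
    asm_eqToHom_val _ _
  have h2 : (eqToHom (hobj Y).symm).1 = fun x => cast (hcar Y).symm x :=
    asm_eqToHom_val _ _
  show g.1 = fun x => (eqToHom (hobj Y).symm).1 ((F.map g).1 ((eqToHom (hobj X)).1 x))
  rw [h1, h2, hmap]
  funext x
  simp

/-- (i) For every applicative morphism `f : (A,φ) → (B,ψ)`, `Asm(f)` is a
well-defined functor (every tracked map stays tracked); (ii) `Asm(δ_A)` is the identity
functor, and `Asm(g ∘ f) = Asm(g) ∘ Asm(f)`; (iii) if `f ≤ g` then the identity functions
are the components of a natural transformation `Asm(f) ⇒ Asm(g)`. -/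
theorem statement7 (A B C : Type) (P : PCA A) (Q : PCA B) (R : PCA C) :
    (∀ (f : A → B → Prop) (hf : IsAppMor P.app P.filt Q.app Q.filt f)
        (X Y : Asm P) (g : X.carrier → Y.carrier),
        (∃ U ∈ P.filt, Tracks P U g) →
        ∃ W ∈ Q.filt,
          Tracks Q (X := asmObj P Q f hf.total X) (Y := asmObj P Q f hf.total Y) W g) ∧
    (∀ hδ : IsAppMor P.app P.filt P.app P.filt (relId A),
        asmFunctor hδ = 𝟭 (Asm P)) ∧
    (∀ (f : A → B → Prop) (g : B → C → Prop)
        (hf : IsAppMor P.app P.filt Q.app Q.filt f)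
        (hg : IsAppMor Q.app Q.filt R.app R.filt g)
        (hgf : IsAppMor P.app P.filt R.app R.filt (RelComp g f)),
        asmFunctor hgf = asmFunctor hf ⋙ asmFunctor hg) ∧
    (∀ (f g : A → B → Prop)
        (hf : IsAppMor P.app P.filt Q.app Q.filt f)
        (hg : IsAppMor P.app P.filt Q.app Q.filt g),
        RelLe Q.app Q.filt f g →
        ∃ η : asmFunctor hf ⟶ asmFunctor hg, ∀ X : Asm P, (η.app X).1 = fun x => x) := by
  refine ⟨fun f hf X Y g hg => tracks_asmMap hf g hg, ?_, ?_, ?_⟩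
  · intro hδ
    refine asmFunctor_eq_aux hδ (𝟭 (Asm P)) (fun X => ?_) (fun X => rfl)
      (fun X Y g => rfl)
    refine asm_ext rfl fun x b => ?_
    constructor
    · rintro ⟨a, ha, rfl⟩; exact ha
    · intro h; exact ⟨b, h, rfl⟩
  · intro f g hf hg hgf
    refine asmFunctor_eq_aux hgf (asmFunctor hf ⋙ asmFunctor hg) (fun X => ?_)
      (fun X => rfl) (fun X Y k => rfl)
    refine asm_ext rfl fun x c => ?_
    constructor
    · rintro ⟨a, ha, b, hab, hbc⟩; exact ⟨b, ⟨a, ha, hab⟩, hbc⟩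
    · rintro ⟨b, ⟨a, ha, hab⟩, hbc⟩; exact ⟨a, ha, b, hab, hbc⟩
  · intro f g hf hg hle
    obtain ⟨U, hU, hle⟩ := hle
    refine ⟨⟨fun X => ⟨fun x => x, U, hU, ?_⟩, fun {X Y} k => Subtype.ext rfl⟩,
      fun X => rfl⟩
    rintro x b r ⟨a, hxa, hab⟩ hr
    obtain ⟨c, hc, hgc⟩ := hle a b hab r hr
    exact ⟨c, hc, a, hxa, hgc⟩

end PcaPaper
end
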